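/- For every integer n ≥ 2, the explicitly given matrices for the Artin generators are invertible over ℤ[q^{±1}, t^{±1}] and satisfy the braid relations L(σ_i)L(σ_{i+1})L(σ_i) = L(σ_{i+1})L(σ_i)L(σ_{i+1}) and L(σ_i)L(σ_j) = L(σ_j)L(σ_i) for |i−j|>1; consequently they define a group homomorphism L: B_n → GL(n(n−1)/2, ℤ[q^{±1}, t^{±1}]) (the Lawrence–Krammer–Bigelow representation). -/

import Mathlib

/-- The braid relations on `n` strands (generator `i : Fin (n-1)` is the Artin
generator `σ_{i+1}` in 1-based labeling). -/
def braidRels (n : ℕ) : Set (FreeGroup (Fin (n - 1))) :=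
  {r | (∃ i j : Fin (n - 1), (i : ℕ) + 1 = (j : ℕ) ∧
        r = FreeGroup.of i * FreeGroup.of j * FreeGroup.of i *
            (FreeGroup.of j * FreeGroup.of i * FreeGroup.of j)⁻¹) ∨
       (∃ i j : Fin (n - 1), (i : ℕ) + 1 < (j : ℕ) ∧
        r = FreeGroup.of i * FreeGroup.of j * (FreeGroup.of j * FreeGroup.of i)⁻¹)}

/-- The braid group `B_n` on `n` strands, as a presented group. -/
abbrev BraidGroup (n : ℕ) := PresentedGroup (braidRels n)

/-- The Artin generator `σ_k` (1-based: valid for `1 ≤ k ≤ n-1`). -/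
def braidGen (n k : ℕ) : BraidGroup n :=
  if h : k - 1 < n - 1 then PresentedGroup.of ⟨k - 1, h⟩ else 1

/-- The band (Birman–Ko–Lee) generator
`a_{i,j} = (σ_i σ_{i+1} ⋯ σ_{j-2}) σ_{j-1} (σ_i σ_{i+1} ⋯ σ_{j-2})⁻¹`
(1-based: valid for `1 ≤ i < j ≤ n`). -/
def band (n i j : ℕ) : BraidGroup n :=
  ((List.range' i (j - 1 - i)).map (braidGen n)).prod * braidGen n (j - 1) *
    (((List.range' i (j - 1 - i)).map (braidGen n)).prod)⁻¹

/-- The submonoid of dual-positive braids `B_n^{+*}`, generated by the band generators. -/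
def dualPos (n : ℕ) : Submonoid (BraidGroup n) :=
  Submonoid.closure {b | ∃ i j : ℕ, 1 ≤ i ∧ i < j ∧ j ≤ n ∧ b = band n i j}

/-- The subword partial order for the dual Garside structure:
`x ≼ y` iff `x⁻¹ * y` is dual-positive. -/
def dualLe (n : ℕ) (x y : BraidGroup n) : Prop := x⁻¹ * y ∈ dualPos n

/-- The dual Garside element `δ = a_{1,2} a_{2,3} ⋯ a_{n-1,n}`. -/
def dualDelta (n : ℕ) : BraidGroup n :=
  ((List.range' 1 (n - 1)).map (fun i => band n i (i + 1))).prod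

/-- The dual Garside supremum: `sup_{Σ*}(β) = min { m : β ≼ δ^m }`. -/
noncomputable def supDual (n : ℕ) (β : BraidGroup n) : ℤ :=
  sInf {m : ℤ | dualLe n β (dualDelta n ^ m)}

/-- The dual Garside infimum: `inf_{Σ*}(β) = max { M : δ^M ≼ β }`. -/
noncomputable def infDual (n : ℕ) (β : BraidGroup n) : ℤ :=
  sSup {m : ℤ | dualLe n (dualDelta n ^ m) β}

/-- A dual-simple element: `1 ≼ s ≼ δ`. -/
def dualSimple (n : ℕ) (s : BraidGroup n) : Prop :=
  dualLe n 1 s ∧ dualLe n s (dualDelta n)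

/-- The dual Garside length: word length with respect to the dual-simple elements
and their inverses. -/
noncomputable def lengthDual (n : ℕ) (β : BraidGroup n) : ℕ :=
  sInf {k : ℕ | ∃ L : List (BraidGroup n), L.length = k ∧
    (∀ x ∈ L, dualSimple n x ∨ dualSimple n x⁻¹) ∧ L.prod = β}

/-- The ring of two-variable Laurent polynomials `ℤ[q^{±1}, t^{±1}]`:
a monomial `q^a t^b` corresponds to the group element `(a, b) : ℤ × ℤ`. -/
abbrev R2 := AddMonoidAlgebra ℤ (ℤ × ℤ)

/-- The variable `q`. -/
noncomputable def Qv : R2 := AddMonoidAlgebra.single (1, 0) 1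

/-- The variable `t`. -/
noncomputable def Tv : R2 := AddMonoidAlgebra.single (0, 1) 1

/-- Kronecker delta for basis indices. -/
noncomputable def eb (p p' : ℕ × ℕ) : R2 := if p = p' then 1 else 0

/-- The `((a,b),(j,k))`-entry of the matrix of `L(σ_i)`, i.e. the coefficient of
`F_{a,b}` in `L(σ_i)(F_{j,k})` (all indices 1-based, `a < b`, `j < k`). -/
noncomputable def lkbEntry (i a b j k : ℕ) : R2 :=
  if i = j ∧ i = k - 1 then (-(Qv ^ 2) * Tv) * eb (a, b) (j, k)
  else if i = j - 1 then
    Qv * eb (a, b) (i, k) + (Qv ^ 2 - Qv) * eb (a, b) (i, j) + (1 - Qv) * eb (a, b) (j, k)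
  else if i = j then eb (a, b) (j + 1, k)
  else if i = k - 1 then
    Qv * eb (a, b) (j, i) + (1 - Qv) * eb (a, b) (j, k) + (Qv - Qv ^ 2) * Tv * eb (a, b) (i, k)
  else if i = k then eb (a, b) (j, k + 1)
  else eb (a, b) (j, k)

/-- The index set `{(j,k) : 1 ≤ j < k ≤ n}` for the basis `F_{j,k}`; it has
cardinality `n(n-1)/2`. -/
abbrev Idx (n : ℕ) := {p : Fin n × Fin n // p.1 < p.2}

/-- The matrix of `L(σ_i)` (1-based, valid for `1 ≤ i ≤ n-1`) in the basis of
standard forks. -/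
noncomputable def lkbGenMatrix (n i : ℕ) : Matrix (Idx n) (Idx n) R2 :=
  fun r c => lkbEntry i ((r.1.1 : ℕ) + 1) ((r.1.2 : ℕ) + 1) ((c.1.1 : ℕ) + 1) ((c.1.2 : ℕ) + 1)

/-- `L` is the Lawrence–Krammer–Bigelow representation: it sends each Artin
generator `σ_i` to the explicit matrix `lkbGenMatrix n i`. -/
def IsLKBRep (n : ℕ) (L : BraidGroup n →* Matrix.GeneralLinearGroup (Idx n) R2) : Prop :=
  ∀ i, 1 ≤ i → i ≤ n - 1 →
    (L (braidGen n i) : Matrix (Idx n) (Idx n) R2) = lkbGenMatrix n i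

/-- The set of exponents of `q` occurring (with nonzero coefficient) in some entry
of the matrix `A`. -/
def qExps {N : Type*} (A : Matrix N N R2) : Set ℤ :=
  {d : ℤ | ∃ r c e, (A r c).coeff (d, e) ≠ 0}

/-- `M_q(A)`: the maximal exponent of `q` occurring in a nonzero entry of `A`. -/
noncomputable def Mq {N : Type*} (A : Matrix N N R2) : ℤ := sSup (qExps A)

/-- `m_q(A)`: the minimal exponent of `q` occurring in a nonzero entry of `A`. -/
noncomputable def mq {N : Type*} (A : Matrix N N R2) : ℤ := sInf (qExps A)


/-! ### Auxiliary infrastructure for the proof -/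

open Matrix in
lemma _dummy_open : True := trivial

open Matrix

noncomputable def Qi : R2 := AddMonoidAlgebra.single (-1, 0) 1
noncomputable def Ti : R2 := AddMonoidAlgebra.single (0, -1) 1

lemma Qv_mul_Qi : Qv * Qi = 1 := by
  rw [Qv, Qi, AddMonoidAlgebra.single_mul_single, mul_one,
    show ((1:ℤ), (0:ℤ)) + (-1, 0) = 0 by norm_num [Prod.ext_iff], ← AddMonoidAlgebra.one_def]

lemma Tv_mul_Ti : Tv * Ti = 1 := by
  rw [Tv, Ti, AddMonoidAlgebra.single_mul_single, mul_one,
    show ((0:ℤ), (1:ℤ)) + (0, -1) = 0 by norm_num [Prod.ext_iff], ← AddMonoidAlgebra.one_def]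

/-- The indicator (standard basis) vector of the pair `p` (1-based). -/
noncomputable def Ev (n : ℕ) (p : ℕ × ℕ) : Idx n → R2 :=
  fun r => eb ((r.1.1 : ℕ) + 1, (r.1.2 : ℕ) + 1) p

lemma pair_inj {n : ℕ} (r c : Idx n)
    (h : ((r.1.1 : ℕ) + 1, (r.1.2 : ℕ) + 1) = ((c.1.1 : ℕ) + 1, (c.1.2 : ℕ) + 1)) : r = c := by
  obtain ⟨h1, h2⟩ := Prod.mk.injEq .. ▸ h
  apply Subtype.ext
  apply Prod.ext <;> [exact Fin.ext (by omega); exact Fin.ext (by omega)]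

lemma mulVec_Ev {n : ℕ} (A : Matrix (Idx n) (Idx n) R2) (c : Idx n) :
    A *ᵥ Ev n ((c.1.1 : ℕ) + 1, (c.1.2 : ℕ) + 1) = fun r => A r c := by
  funext r
  show ∑ x : Idx n, A r x * Ev n _ x = _
  rw [Finset.sum_eq_single c]
  · rw [Ev, eb, if_pos rfl, mul_one]
  · intro b _ hb
    rw [Ev, eb, if_neg (fun h => hb (pair_inj b c h)), mul_zero]
  · intro h; exact absurd (Finset.mem_univ c) h

/-- The element of `Idx n` corresponding to the (1-based) valid pair `(u, v)`. -/
def mkIdx (n u v : ℕ) (h1 : 1 ≤ u) (h2 : u < v) (h3 : v ≤ n) : Idx n :=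
  ⟨(⟨u - 1, by omega⟩, ⟨v - 1, by omega⟩), by simp [Fin.lt_def]; omega⟩

lemma mat_ext {n : ℕ} {A B : Matrix (Idx n) (Idx n) R2}
    (h : ∀ u v, 1 ≤ u → u < v → v ≤ n → A *ᵥ Ev n (u, v) = B *ᵥ Ev n (u, v)) : A = B := by
  apply Matrix.ext
  intro r c
  have h1 : 1 ≤ (c.1.1 : ℕ) + 1 := by omega
  have h2 : (c.1.1 : ℕ) + 1 < (c.1.2 : ℕ) + 1 := by
    have := c.2; rw [Fin.lt_def] at this; omega
  have h3 : (c.1.2 : ℕ) + 1 ≤ n := by omega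
  have := h _ _ h1 h2 h3
  rw [mulVec_Ev, mulVec_Ev] at this
  exact congrFun this r

lemma mkIdx_fst (n u v : ℕ) (h1 : 1 ≤ u) (h2 : u < v) (h3 : v ≤ n) :
    ((mkIdx n u v h1 h2 h3).1.1 : ℕ) = u - 1 := rfl

lemma mkIdx_snd (n u v : ℕ) (h1 : 1 ≤ u) (h2 : u < v) (h3 : v ≤ n) :
    ((mkIdx n u v h1 h2 h3).1.2 : ℕ) = v - 1 := rfl

lemma gen_mulVec (n m u v : ℕ) (h1 : 1 ≤ u) (h2 : u < v) (h3 : v ≤ n) :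
    lkbGenMatrix n m *ᵥ Ev n (u, v) =
      fun r => lkbEntry m ((r.1.1 : ℕ) + 1) ((r.1.2 : ℕ) + 1) u v := by
  have e : Ev n (u, v) = Ev n (((mkIdx n u v h1 h2 h3).1.1 : ℕ) + 1,
      ((mkIdx n u v h1 h2 h3).1.2 : ℕ) + 1) := by
    rw [mkIdx_fst, mkIdx_snd, show u - 1 + 1 = u by omega, show v - 1 + 1 = v by omega]
  rw [e, mulVec_Ev]
  funext r
  show lkbEntry m _ _ _ _ = _
  rw [mkIdx_fst, mkIdx_snd, show u - 1 + 1 = u by omega, show v - 1 + 1 = v by omega]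


section ActLemmas

variable (n m u v : ℕ)

lemma act1 (h1 : 1 ≤ u) (h2 : u < v) (h3 : v ≤ n) (c1 : m = u) (c2 : m = v - 1) :
    lkbGenMatrix n m *ᵥ Ev n (u, v) = (-(Qv ^ 2) * Tv) • Ev n (u, v) := by
  rw [gen_mulVec n m u v h1 h2 h3]; funext r
  show lkbEntry m _ _ u v = _
  unfold lkbEntry
  rw [if_pos ⟨c1, c2⟩]; rfl

lemma actB (h1 : 1 ≤ u) (h2 : u < v) (h3 : v ≤ n) (c1 : m = u - 1) :
    lkbGenMatrix n m *ᵥ Ev n (u, v) =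
      Qv • Ev n (m, v) + (Qv ^ 2 - Qv) • Ev n (m, u) + (1 - Qv) • Ev n (u, v) := by
  rw [gen_mulVec n m u v h1 h2 h3]; funext r
  show lkbEntry m _ _ u v = _
  unfold lkbEntry
  rw [if_neg (by omega), if_pos c1]; rfl

lemma actC (h1 : 1 ≤ u) (h2 : u < v) (h3 : v ≤ n) (c1 : m = u) (c2 : v ≠ u + 1) :
    lkbGenMatrix n m *ᵥ Ev n (u, v) = Ev n (u + 1, v) := by
  rw [gen_mulVec n m u v h1 h2 h3]; funext r
  show lkbEntry m _ _ u v = _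
  unfold lkbEntry
  rw [if_neg (by omega), if_neg (by omega), if_pos c1]; rfl

lemma actD (h1 : 1 ≤ u) (h2 : u < v) (h3 : v ≤ n) (c1 : m = v - 1) (c2 : m ≠ u)
    (c3 : m ≠ u - 1) :
    lkbGenMatrix n m *ᵥ Ev n (u, v) =
      Qv • Ev n (u, m) + (1 - Qv) • Ev n (u, v) + ((Qv - Qv ^ 2) * Tv) • Ev n (m, v) := by
  rw [gen_mulVec n m u v h1 h2 h3]; funext r
  show lkbEntry m _ _ u v = _
  unfold lkbEntry
  rw [if_neg (by omega), if_neg (by omega), if_neg (by omega), if_pos c1]; rfl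

lemma actE (h1 : 1 ≤ u) (h2 : u < v) (h3 : v ≤ n) (c1 : m = v) :
    lkbGenMatrix n m *ᵥ Ev n (u, v) = Ev n (u, v + 1) := by
  rw [gen_mulVec n m u v h1 h2 h3]; funext r
  show lkbEntry m _ _ u v = _
  unfold lkbEntry
  rw [if_neg (by omega), if_neg (by omega), if_neg (by omega), if_neg (by omega), if_pos c1]
  rfl

lemma actF (h1 : 1 ≤ u) (h2 : u < v) (h3 : v ≤ n) (c1 : m ≠ u - 1) (c2 : m ≠ u)
    (c3 : m ≠ v - 1) (c4 : m ≠ v) :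
    lkbGenMatrix n m *ᵥ Ev n (u, v) = Ev n (u, v) := by
  rw [gen_mulVec n m u v h1 h2 h3]; funext r
  show lkbEntry m _ _ u v = _
  unfold lkbEntry
  rw [if_neg (by omega), if_neg (by omega), if_neg (by omega), if_neg (by omega),
    if_neg (by omega)]
  rfl

end ActLemmas


lemma braid_rel (n i : ℕ) (hi : 1 ≤ i) (hin : i + 1 + 1 ≤ n) :
    lkbGenMatrix n i * lkbGenMatrix n (i+1) * lkbGenMatrix n i =
      lkbGenMatrix n (i+1) * lkbGenMatrix n i * lkbGenMatrix n (i+1) := by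
  apply mat_ext
  intro u v h1 h2 h3
  simp only [← Matrix.mulVec_mulVec]
  have hcases : (v < i ∨ i + 2 < u ∨ (u < i ∧ i + 2 < v)) ∨
      (i = u ∧ i+1 = v) ∨ (i = u ∧ i+1+1 = v) ∨ (i+1 = u ∧ i+1+1 = v) ∨
      (u < i ∧ i = v) ∨ (u < i ∧ i+1 = v) ∨ (u < i ∧ i+1+1 = v) ∨
      (i = u ∧ i+1+1 < v) ∨ (i+1 = u ∧ i+1+1 < v) ∨ (i+1+1 = u ∧ i+1+1 < v) := by omega
  rcases hcases with htriv |
    ⟨rfl,rfl⟩ |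
    ⟨rfl,rfl⟩ |
    ⟨rfl,rfl⟩ |
    ⟨hu,rfl⟩ |
    ⟨hu,rfl⟩ |
    ⟨hu,rfl⟩ |
    ⟨rfl,hv⟩ |
    ⟨rfl,hv⟩ |
    ⟨rfl,hv⟩
  · simp only [actF n i u v (by omega) (by omega) (by omega) (by omega) (by omega) (by omega) (by omega),
      actF n (i+1) u v (by omega) (by omega) (by omega) (by omega) (by omega) (by omega) (by omega)]
  · simp only [Matrix.mulVec_add, Matrix.mulVec_smul,
      act1 n i i (i+1) (by omega) (by omega) (by omega) (by omega) (by omega),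
      actE n (i+1) i (i+1) (by omega) (by omega) (by omega) (by omega),
      actC n i i (i+1+1) (by omega) (by omega) (by omega) (by omega) (by omega),
      act1 n (i+1) (i+1) (i+1+1) (by omega) (by omega) (by omega) (by omega) (by omega)]
    try (funext r; simp only [Ev, Pi.add_apply, Pi.smul_apply, smul_eq_mul]; ring)
  · simp only [Matrix.mulVec_add, Matrix.mulVec_smul,
      actC n i i (i+1+1) (by omega) (by omega) (by omega) (by omega) (by omega),
      act1 n (i+1) (i+1) (i+1+1) (by omega) (by omega) (by omega) (by omega) (by omega),
      actB n i (i+1) (i+1+1) (by omega) (by omega) (by omega) (by omega),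
      actD n (i+1) i (i+1+1) (by omega) (by omega) (by omega) (by omega) (by omega) (by omega),
      act1 n i i (i+1) (by omega) (by omega) (by omega) (by omega) (by omega),
      actE n (i+1) i (i+1) (by omega) (by omega) (by omega) (by omega)]
    try (funext r; simp only [Ev, Pi.add_apply, Pi.smul_apply, smul_eq_mul]; ring)
  · simp only [Matrix.mulVec_add, Matrix.mulVec_smul,
      actB n i (i+1) (i+1+1) (by omega) (by omega) (by omega) (by omega),
      actD n (i+1) i (i+1+1) (by omega) (by omega) (by omega) (by omega) (by omega) (by omega),
      actE n (i+1) i (i+1) (by omega) (by omega) (by omega) (by omega),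
      act1 n (i+1) (i+1) (i+1+1) (by omega) (by omega) (by omega) (by omega) (by omega),
      act1 n i i (i+1) (by omega) (by omega) (by omega) (by omega) (by omega),
      actC n i i (i+1+1) (by omega) (by omega) (by omega) (by omega) (by omega)]
    try (funext r; simp only [Ev, Pi.add_apply, Pi.smul_apply, smul_eq_mul]; ring)
  · simp only [Matrix.mulVec_add, Matrix.mulVec_smul,
      actE n i u i (by omega) (by omega) (by omega) (by omega),
      actE n (i+1) u (i+1) (by omega) (by omega) (by omega) (by omega),
      actF n i u (i+1+1) (by omega) (by omega) (by omega) (by omega) (by omega) (by omega) (by omega),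
      actF n (i+1) u i (by omega) (by omega) (by omega) (by omega) (by omega) (by omega) (by omega)]
    try (funext r; simp only [Ev, Pi.add_apply, Pi.smul_apply, smul_eq_mul]; ring)
  · simp only [Matrix.mulVec_add, Matrix.mulVec_smul,
      actD n i u (i+1) (by omega) (by omega) (by omega) (by omega) (by omega) (by omega),
      actD n (i+1) u (i+1+1) (by omega) (by omega) (by omega) (by omega) (by omega) (by omega),
      actE n i u i (by omega) (by omega) (by omega) (by omega),
      actE n (i+1) u (i+1) (by omega) (by omega) (by omega) (by omega),
      actE n (i+1) i (i+1) (by omega) (by omega) (by omega) (by omega),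
      actC n i i (i+1+1) (by omega) (by omega) (by omega) (by omega) (by omega),
      actF n (i+1) u i (by omega) (by omega) (by omega) (by omega) (by omega) (by omega) (by omega),
      actF n i u (i+1+1) (by omega) (by omega) (by omega) (by omega) (by omega) (by omega) (by omega)]
    try (funext r; simp only [Ev, Pi.add_apply, Pi.smul_apply, smul_eq_mul]; ring)
  · simp only [Matrix.mulVec_add, Matrix.mulVec_smul,
      actF n i u (i+1+1) (by omega) (by omega) (by omega) (by omega) (by omega) (by omega) (by omega),
      actD n (i+1) u (i+1+1) (by omega) (by omega) (by omega) (by omega) (by omega) (by omega),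
      actD n i u (i+1) (by omega) (by omega) (by omega) (by omega) (by omega) (by omega),
      actB n i (i+1) (i+1+1) (by omega) (by omega) (by omega) (by omega),
      actF n (i+1) u i (by omega) (by omega) (by omega) (by omega) (by omega) (by omega) (by omega),
      actE n (i+1) u (i+1) (by omega) (by omega) (by omega) (by omega),
      actE n (i+1) i (i+1) (by omega) (by omega) (by omega) (by omega),
      actD n (i+1) i (i+1+1) (by omega) (by omega) (by omega) (by omega) (by omega) (by omega),
      act1 n (i+1) (i+1) (i+1+1) (by omega) (by omega) (by omega) (by omega) (by omega)]
    try (funext r; simp only [Ev, Pi.add_apply, Pi.smul_apply, smul_eq_mul]; ring)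
  · simp only [Matrix.mulVec_add, Matrix.mulVec_smul,
      actC n i i v (by omega) (by omega) (by omega) (by omega) (by omega),
      actC n (i+1) (i+1) v (by omega) (by omega) (by omega) (by omega) (by omega),
      actF n i (i+1+1) v (by omega) (by omega) (by omega) (by omega) (by omega) (by omega) (by omega),
      actF n (i+1) i v (by omega) (by omega) (by omega) (by omega) (by omega) (by omega) (by omega)]
    try (funext r; simp only [Ev, Pi.add_apply, Pi.smul_apply, smul_eq_mul]; ring)
  · simp only [Matrix.mulVec_add, Matrix.mulVec_smul,
      actB n i (i+1) v (by omega) (by omega) (by omega) (by omega),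
      actF n (i+1) i v (by omega) (by omega) (by omega) (by omega) (by omega) (by omega) (by omega),
      actE n (i+1) i (i+1) (by omega) (by omega) (by omega) (by omega),
      actC n (i+1) (i+1) v (by omega) (by omega) (by omega) (by omega) (by omega),
      actC n i i v (by omega) (by omega) (by omega) (by omega) (by omega),
      actC n i i (i+1+1) (by omega) (by omega) (by omega) (by omega) (by omega),
      actF n i (i+1+1) v (by omega) (by omega) (by omega) (by omega) (by omega) (by omega) (by omega),
      actB n (i+1) (i+1+1) v (by omega) (by omega) (by omega) (by omega)]
    try (funext r; simp only [Ev, Pi.add_apply, Pi.smul_apply, smul_eq_mul]; ring)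
  · simp only [Matrix.mulVec_add, Matrix.mulVec_smul,
      actF n i (i+1+1) v (by omega) (by omega) (by omega) (by omega) (by omega) (by omega) (by omega),
      actB n (i+1) (i+1+1) v (by omega) (by omega) (by omega) (by omega),
      actB n i (i+1) v (by omega) (by omega) (by omega) (by omega),
      actB n i (i+1) (i+1+1) (by omega) (by omega) (by omega) (by omega),
      actF n (i+1) i v (by omega) (by omega) (by omega) (by omega) (by omega) (by omega) (by omega),
      actE n (i+1) i (i+1) (by omega) (by omega) (by omega) (by omega),
      actC n (i+1) (i+1) v (by omega) (by omega) (by omega) (by omega) (by omega),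
      actD n (i+1) i (i+1+1) (by omega) (by omega) (by omega) (by omega) (by omega) (by omega),
      act1 n (i+1) (i+1) (i+1+1) (by omega) (by omega) (by omega) (by omega) (by omega)]
    try (funext r; simp only [Ev, Pi.add_apply, Pi.smul_apply, smul_eq_mul]; ring)


set_option linter.unreachableTactic false in
set_option linter.unusedTactic false in
set_option maxHeartbeats 2000000 in
lemma comm_rel (n m l : ℕ) (hm : 1 ≤ m) (hml : m + 1 < l) (hl : l + 1 ≤ n) :
    lkbGenMatrix n m * lkbGenMatrix n l = lkbGenMatrix n l * lkbGenMatrix n m := by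
  apply mat_ext
  intro u v h1 h2 h3
  simp only [← Matrix.mulVec_mulVec]
  have hcases : (u ≠ m ∧ u ≠ m+1 ∧ v ≠ m ∧ v ≠ m+1 ∧ u ≠ l ∧ u ≠ l+1 ∧ v ≠ l ∧ v ≠ l+1) ∨
      (m = v) ∨
      (u < m ∧ m+1 = v) ∨
      (m = u ∧ m+1 = v) ∨
      (m = u ∧ m+1 < v ∧ v ≠ l ∧ v ≠ l+1) ∨
      (m+1 = u ∧ v ≠ l ∧ v ≠ l+1) ∨
      (u ≠ m ∧ u ≠ m+1 ∧ l = v) ∨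
      (u ≠ m ∧ u ≠ m+1 ∧ u ≠ l ∧ l+1 = v) ∨
      (l = u ∧ l+1 = v) ∨
      (l = u ∧ l+1 < v) ∨
      (l+1 = u) ∨
      (m = u ∧ l = v) ∨
      (m = u ∧ l+1 = v) ∨
      (m+1 = u ∧ l = v) ∨
      (m+1 = u ∧ l+1 = v) := by omega
  rcases hcases with htriv |
    rfl |
    ⟨hu,rfl⟩ |
    ⟨rfl,rfl⟩ |
    ⟨rfl,hv1,hv2,hv3⟩ |
    ⟨rfl,hv1,hv2⟩ |
    ⟨hu1,hu2,rfl⟩ |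
    ⟨hu1,hu2,hu3,rfl⟩ |
    ⟨rfl,rfl⟩ |
    ⟨rfl,hv⟩ |
    rfl |
    ⟨rfl,rfl⟩ |
    ⟨rfl,rfl⟩ |
    ⟨rfl,rfl⟩ |
    ⟨rfl,rfl⟩
  · simp only [actF n m u v (by omega) (by omega) (by omega) (by omega) (by omega) (by omega) (by omega),
      actF n l u v (by omega) (by omega) (by omega) (by omega) (by omega) (by omega) (by omega)]
  · simp only [Matrix.mulVec_add, Matrix.mulVec_smul,
      actE n m u m (by omega) (by omega) (by omega) (by omega),
      actF n l u m (by omega) (by omega) (by omega) (by omega) (by omega) (by omega) (by omega),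
      actF n l u (m+1) (by omega) (by omega) (by omega) (by omega) (by omega) (by omega) (by omega)]
    try (funext r; simp only [Ev, Pi.add_apply, Pi.smul_apply, smul_eq_mul]; ring)
  · simp only [Matrix.mulVec_add, Matrix.mulVec_smul,
      actD n m u (m+1) (by omega) (by omega) (by omega) (by omega) (by omega) (by omega),
      actF n l u (m+1) (by omega) (by omega) (by omega) (by omega) (by omega) (by omega) (by omega),
      actF n l u m (by omega) (by omega) (by omega) (by omega) (by omega) (by omega) (by omega),
      actF n l m (m+1) (by omega) (by omega) (by omega) (by omega) (by omega) (by omega) (by omega)]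
    try (funext r; simp only [Ev, Pi.add_apply, Pi.smul_apply, smul_eq_mul]; ring)
  · simp only [Matrix.mulVec_add, Matrix.mulVec_smul,
      act1 n m m (m+1) (by omega) (by omega) (by omega) (by omega) (by omega),
      actF n l m (m+1) (by omega) (by omega) (by omega) (by omega) (by omega) (by omega) (by omega)]
    try (funext r; simp only [Ev, Pi.add_apply, Pi.smul_apply, smul_eq_mul]; ring)
  · simp only [Matrix.mulVec_add, Matrix.mulVec_smul,
      actC n m m v (by omega) (by omega) (by omega) (by omega) (by omega),
      actF n l m v (by omega) (by omega) (by omega) (by omega) (by omega) (by omega) (by omega),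
      actF n l (m+1) v (by omega) (by omega) (by omega) (by omega) (by omega) (by omega) (by omega)]
    try (funext r; simp only [Ev, Pi.add_apply, Pi.smul_apply, smul_eq_mul]; ring)
  · simp only [Matrix.mulVec_add, Matrix.mulVec_smul,
      actB n m (m+1) v (by omega) (by omega) (by omega) (by omega),
      actF n l (m+1) v (by omega) (by omega) (by omega) (by omega) (by omega) (by omega) (by omega),
      actF n l m v (by omega) (by omega) (by omega) (by omega) (by omega) (by omega) (by omega),
      actF n l m (m+1) (by omega) (by omega) (by omega) (by omega) (by omega) (by omega) (by omega)]
    try (funext r; simp only [Ev, Pi.add_apply, Pi.smul_apply, smul_eq_mul]; ring)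
  · simp only [Matrix.mulVec_add, Matrix.mulVec_smul,
      actE n l u l (by omega) (by omega) (by omega) (by omega),
      actF n m u l (by omega) (by omega) (by omega) (by omega) (by omega) (by omega) (by omega),
      actF n m u (l+1) (by omega) (by omega) (by omega) (by omega) (by omega) (by omega) (by omega)]
    try (funext r; simp only [Ev, Pi.add_apply, Pi.smul_apply, smul_eq_mul]; ring)
  · simp only [Matrix.mulVec_add, Matrix.mulVec_smul,
      actD n l u (l+1) (by omega) (by omega) (by omega) (by omega) (by omega) (by omega),
      actF n m u (l+1) (by omega) (by omega) (by omega) (by omega) (by omega) (by omega) (by omega),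
      actF n m u l (by omega) (by omega) (by omega) (by omega) (by omega) (by omega) (by omega),
      actF n m l (l+1) (by omega) (by omega) (by omega) (by omega) (by omega) (by omega) (by omega)]
    try (funext r; simp only [Ev, Pi.add_apply, Pi.smul_apply, smul_eq_mul]; ring)
  · simp only [Matrix.mulVec_add, Matrix.mulVec_smul,
      act1 n l l (l+1) (by omega) (by omega) (by omega) (by omega) (by omega),
      actF n m l (l+1) (by omega) (by omega) (by omega) (by omega) (by omega) (by omega) (by omega)]
    try (funext r; simp only [Ev, Pi.add_apply, Pi.smul_apply, smul_eq_mul]; ring)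
  · simp only [Matrix.mulVec_add, Matrix.mulVec_smul,
      actC n l l v (by omega) (by omega) (by omega) (by omega) (by omega),
      actF n m l v (by omega) (by omega) (by omega) (by omega) (by omega) (by omega) (by omega),
      actF n m (l+1) v (by omega) (by omega) (by omega) (by omega) (by omega) (by omega) (by omega)]
    try (funext r; simp only [Ev, Pi.add_apply, Pi.smul_apply, smul_eq_mul]; ring)
  · simp only [Matrix.mulVec_add, Matrix.mulVec_smul,
      actB n l (l+1) v (by omega) (by omega) (by omega) (by omega),
      actF n m (l+1) v (by omega) (by omega) (by omega) (by omega) (by omega) (by omega) (by omega),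
      actF n m l v (by omega) (by omega) (by omega) (by omega) (by omega) (by omega) (by omega),
      actF n m l (l+1) (by omega) (by omega) (by omega) (by omega) (by omega) (by omega) (by omega)]
    try (funext r; simp only [Ev, Pi.add_apply, Pi.smul_apply, smul_eq_mul]; ring)
  · simp only [Matrix.mulVec_add, Matrix.mulVec_smul,
      actC n m m l (by omega) (by omega) (by omega) (by omega) (by omega),
      actE n l m l (by omega) (by omega) (by omega) (by omega),
      actE n l (m+1) l (by omega) (by omega) (by omega) (by omega),
      actC n m m (l+1) (by omega) (by omega) (by omega) (by omega) (by omega)]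
    try (funext r; simp only [Ev, Pi.add_apply, Pi.smul_apply, smul_eq_mul]; ring)
  · simp only [Matrix.mulVec_add, Matrix.mulVec_smul,
      actD n l m (l+1) (by omega) (by omega) (by omega) (by omega) (by omega) (by omega),
      actC n m m l (by omega) (by omega) (by omega) (by omega) (by omega),
      actC n m m (l+1) (by omega) (by omega) (by omega) (by omega) (by omega),
      actF n m l (l+1) (by omega) (by omega) (by omega) (by omega) (by omega) (by omega) (by omega),
      actD n l (m+1) (l+1) (by omega) (by omega) (by omega) (by omega) (by omega) (by omega)]
    try (funext r; simp only [Ev, Pi.add_apply, Pi.smul_apply, smul_eq_mul]; ring)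
  · simp only [Matrix.mulVec_add, Matrix.mulVec_smul,
      actE n l (m+1) l (by omega) (by omega) (by omega) (by omega),
      actB n m (m+1) (l+1) (by omega) (by omega) (by omega) (by omega),
      actB n m (m+1) l (by omega) (by omega) (by omega) (by omega),
      actE n l m l (by omega) (by omega) (by omega) (by omega),
      actF n l m (m+1) (by omega) (by omega) (by omega) (by omega) (by omega) (by omega) (by omega)]
    try (funext r; simp only [Ev, Pi.add_apply, Pi.smul_apply, smul_eq_mul]; ring)
  · simp only [Matrix.mulVec_add, Matrix.mulVec_smul,
      actD n l (m+1) (l+1) (by omega) (by omega) (by omega) (by omega) (by omega) (by omega),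
      actB n m (m+1) l (by omega) (by omega) (by omega) (by omega),
      actB n m (m+1) (l+1) (by omega) (by omega) (by omega) (by omega),
      actF n m l (l+1) (by omega) (by omega) (by omega) (by omega) (by omega) (by omega) (by omega),
      actD n l m (l+1) (by omega) (by omega) (by omega) (by omega) (by omega) (by omega),
      actF n l m (m+1) (by omega) (by omega) (by omega) (by omega) (by omega) (by omega) (by omega)]
    try (funext r; simp only [Ev, Pi.add_apply, Pi.smul_apply, smul_eq_mul]; ring)


/-! ### The inverse matrices -/

noncomputable def lkbEntryInv (i a b j k : ℕ) : R2 :=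
  if i = j ∧ i = k - 1 then (-(Qi ^ 2) * Ti) * eb (a, b) (j, k)
  else if i = j - 1 then eb (a, b) (j - 1, k)
  else if i = j then
    Qi * eb (a, b) (j + 1, k) + (1 - Qi) * eb (a, b) (j, k) +
      ((Qi - Qi ^ 2) * Ti) * eb (a, b) (i, i + 1)
  else if i = k - 1 then eb (a, b) (j, i)
  else if i = k then
    Qi * eb (a, b) (j, k + 1) + (1 - Qi) * eb (a, b) (j, k) +
      (Qi ^ 2 - Qi) * eb (a, b) (i, i + 1)
  else eb (a, b) (j, k)

noncomputable def lkbGenMatrixInv (n i : ℕ) : Matrix (Idx n) (Idx n) R2 :=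
  fun r c => lkbEntryInv i ((r.1.1 : ℕ) + 1) ((r.1.2 : ℕ) + 1) ((c.1.1 : ℕ) + 1) ((c.1.2 : ℕ) + 1)

lemma invGen_mulVec (n m u v : ℕ) (h1 : 1 ≤ u) (h2 : u < v) (h3 : v ≤ n) :
    lkbGenMatrixInv n m *ᵥ Ev n (u, v) =
      fun r => lkbEntryInv m ((r.1.1 : ℕ) + 1) ((r.1.2 : ℕ) + 1) u v := by
  have e : Ev n (u, v) = Ev n (((mkIdx n u v h1 h2 h3).1.1 : ℕ) + 1,
      ((mkIdx n u v h1 h2 h3).1.2 : ℕ) + 1) := by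
    rw [mkIdx_fst, mkIdx_snd, show u - 1 + 1 = u by omega, show v - 1 + 1 = v by omega]
  rw [e, mulVec_Ev]
  funext r
  show lkbEntryInv m _ _ _ _ = _
  rw [mkIdx_fst, mkIdx_snd, show u - 1 + 1 = u by omega, show v - 1 + 1 = v by omega]

section InvActLemmas

variable (n m u v : ℕ)

lemma iact1 (h1 : 1 ≤ u) (h2 : u < v) (h3 : v ≤ n) (c1 : m = u) (c2 : m = v - 1) :
    lkbGenMatrixInv n m *ᵥ Ev n (u, v) = (-(Qi ^ 2) * Ti) • Ev n (u, v) := by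
  rw [invGen_mulVec n m u v h1 h2 h3]; funext r
  show lkbEntryInv m _ _ u v = _
  unfold lkbEntryInv
  rw [if_pos ⟨c1, c2⟩]; rfl

lemma iactB (h1 : 1 ≤ u) (h2 : u < v) (h3 : v ≤ n) (c1 : m = u - 1) :
    lkbGenMatrixInv n m *ᵥ Ev n (u, v) = Ev n (m, v) := by
  rw [invGen_mulVec n m u v h1 h2 h3]; funext r
  show lkbEntryInv m _ _ u v = _
  unfold lkbEntryInv
  rw [if_neg (by omega), if_pos c1, ← c1]
  rfl

lemma iactC (h1 : 1 ≤ u) (h2 : u < v) (h3 : v ≤ n) (c1 : m = u) (c2 : v ≠ u + 1) :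
    lkbGenMatrixInv n m *ᵥ Ev n (u, v) =
      Qi • Ev n (u + 1, v) + (1 - Qi) • Ev n (u, v) + ((Qi - Qi ^ 2) * Ti) • Ev n (m, m + 1) := by
  rw [invGen_mulVec n m u v h1 h2 h3]; funext r
  show lkbEntryInv m _ _ u v = _
  unfold lkbEntryInv
  rw [if_neg (by omega), if_neg (by omega), if_pos c1]; rfl

lemma iactD (h1 : 1 ≤ u) (h2 : u < v) (h3 : v ≤ n) (c1 : m = v - 1) (c2 : m ≠ u)
    (c3 : m ≠ u - 1) :
    lkbGenMatrixInv n m *ᵥ Ev n (u, v) = Ev n (u, m) := by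
  rw [invGen_mulVec n m u v h1 h2 h3]; funext r
  show lkbEntryInv m _ _ u v = _
  unfold lkbEntryInv
  rw [if_neg (by omega), if_neg (by omega), if_neg (by omega), if_pos c1]; rfl

lemma iactE (h1 : 1 ≤ u) (h2 : u < v) (h3 : v ≤ n) (c1 : m = v) :
    lkbGenMatrixInv n m *ᵥ Ev n (u, v) =
      Qi • Ev n (u, v + 1) + (1 - Qi) • Ev n (u, v) + (Qi ^ 2 - Qi) • Ev n (m, m + 1) := by
  rw [invGen_mulVec n m u v h1 h2 h3]; funext r
  show lkbEntryInv m _ _ u v = _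
  unfold lkbEntryInv
  rw [if_neg (by omega), if_neg (by omega), if_neg (by omega), if_neg (by omega), if_pos c1]
  rfl

lemma iactF (h1 : 1 ≤ u) (h2 : u < v) (h3 : v ≤ n) (c1 : m ≠ u - 1) (c2 : m ≠ u)
    (c3 : m ≠ v - 1) (c4 : m ≠ v) :
    lkbGenMatrixInv n m *ᵥ Ev n (u, v) = Ev n (u, v) := by
  rw [invGen_mulVec n m u v h1 h2 h3]; funext r
  show lkbEntryInv m _ _ u v = _
  unfold lkbEntryInv
  rw [if_neg (by omega), if_neg (by omega), if_neg (by omega), if_neg (by omega),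
    if_neg (by omega)]
  rfl

end InvActLemmas

set_option linter.unreachableTactic false in
set_option linter.unusedTactic false in
lemma gen_mul_inv (n i : ℕ) (hi : 1 ≤ i) (hin : i + 1 ≤ n) :
    lkbGenMatrix n i * lkbGenMatrixInv n i = 1 := by
  apply mat_ext
  intro u v h1 h2 h3
  rw [Matrix.one_mulVec]
  simp only [← Matrix.mulVec_mulVec]
  have hcases : (u ≠ i ∧ u ≠ i + 1 ∧ v ≠ i ∧ v ≠ i + 1) ∨
      (i = u ∧ i + 1 = v) ∨ (i = v) ∨ (u < i ∧ i + 1 = v) ∨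
      (i = u ∧ i + 1 < v) ∨ (i + 1 = u) := by omega
  rcases hcases with htriv | ⟨rfl, rfl⟩ | rfl | ⟨hu, rfl⟩ | ⟨rfl, hv⟩ | rfl
  · rw [iactF n i u v h1 h2 h3 (by omega) (by omega) (by omega) (by omega),
      actF n i u v h1 h2 h3 (by omega) (by omega) (by omega) (by omega)]
  · rw [iact1 n i i (i+1) (by omega) (by omega) (by omega) (by omega) (by omega),
      Matrix.mulVec_smul,
      act1 n i i (i+1) (by omega) (by omega) (by omega) (by omega) (by omega),
      smul_smul, show (-(Qi ^ 2) * Ti) * (-(Qv ^ 2) * Tv) = 1 by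
        rw [show (-(Qi ^ 2) * Ti) * (-(Qv ^ 2) * Tv) = (Qv * Qi)^2 * (Tv * Ti) by ring,
          Qv_mul_Qi, Tv_mul_Ti]; ring,
      one_smul]
  · simp only [Matrix.mulVec_add, Matrix.mulVec_smul,
      iactE n i u i (by omega) (by omega) (by omega) (by omega),
      actD n i u (i+1) (by omega) (by omega) (by omega) (by omega) (by omega) (by omega),
      actE n i u i (by omega) (by omega) (by omega) (by omega),
      act1 n i i (i+1) (by omega) (by omega) (by omega) (by omega) (by omega)]
    funext r
    simp only [Ev, Pi.add_apply, Pi.smul_apply, smul_eq_mul]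
    linear_combination (eb ((r.1.1 : ℕ) + 1, (r.1.2 : ℕ) + 1) (u, i)
      - eb ((r.1.1 : ℕ) + 1, (r.1.2 : ℕ) + 1) (u, i + 1)
      - Qv * Qi * Tv * eb ((r.1.1 : ℕ) + 1, (r.1.2 : ℕ) + 1) (i, i + 1)) * Qv_mul_Qi
  · rw [iactD n i u (i+1) (by omega) (by omega) (by omega) (by omega) (by omega) (by omega),
      actE n i u i (by omega) (by omega) (by omega) (by omega)]
  · simp only [Matrix.mulVec_add, Matrix.mulVec_smul,
      iactC n i i v (by omega) (by omega) (by omega) (by omega) (by omega),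
      actB n i (i+1) v (by omega) (by omega) (by omega) (by omega),
      actC n i i v (by omega) (by omega) (by omega) (by omega) (by omega),
      act1 n i i (i+1) (by omega) (by omega) (by omega) (by omega) (by omega)]
    funext r
    simp only [Ev, Pi.add_apply, Pi.smul_apply, smul_eq_mul]
    linear_combination (eb ((r.1.1 : ℕ) + 1, (r.1.2 : ℕ) + 1) (i, v)
      - eb ((r.1.1 : ℕ) + 1, (r.1.2 : ℕ) + 1) (i + 1, v)
      + Qv * Qi * eb ((r.1.1 : ℕ) + 1, (r.1.2 : ℕ) + 1) (i, i + 1)) * Qv_mul_Qi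
      + (-(Qv ^ 2) * (Qi - Qi ^ 2) * eb ((r.1.1 : ℕ) + 1, (r.1.2 : ℕ) + 1) (i, i + 1)) * Tv_mul_Ti
  · rw [iactB n i (i+1) v (by omega) (by omega) (by omega) (by omega),
      actC n i i v (by omega) (by omega) (by omega) (by omega) (by omega)]

lemma gen_isUnit (n i : ℕ) (hi : 1 ≤ i) (hin : i + 1 ≤ n) : IsUnit (lkbGenMatrix n i) :=
  ⟨⟨lkbGenMatrix n i, lkbGenMatrixInv n i, gen_mul_inv n i hi hin,
    mul_eq_one_comm.mp (gen_mul_inv n i hi hin)⟩, rfl⟩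

/-- The explicit matrices `lkbGenMatrix n i` are invertible over
`ℤ[q^{±1}, t^{±1}]` and satisfy the braid relations, and consequently they define
a group homomorphism `L : B_n → GL(n(n-1)/2, ℤ[q^{±1}, t^{±1}])` (the
Lawrence–Krammer–Bigelow representation). -/
theorem lkb_matrices_give_representation (n : ℕ) (hn : 2 ≤ n) :
    (∀ i, 1 ≤ i → i ≤ n - 1 → IsUnit (lkbGenMatrix n i)) ∧
    (∀ i, 1 ≤ i → i + 1 ≤ n - 1 →
      lkbGenMatrix n i * lkbGenMatrix n (i + 1) * lkbGenMatrix n i =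
        lkbGenMatrix n (i + 1) * lkbGenMatrix n i * lkbGenMatrix n (i + 1)) ∧
    (∀ i j, 1 ≤ i → 1 ≤ j → i ≤ n - 1 → j ≤ n - 1 → (i + 1 < j ∨ j + 1 < i) →
      lkbGenMatrix n i * lkbGenMatrix n j = lkbGenMatrix n j * lkbGenMatrix n i) ∧
    (∃ L : BraidGroup n →* Matrix.GeneralLinearGroup (Idx n) R2, IsLKBRep n L) := by
  have hinv : ∀ i, 1 ≤ i → i ≤ n - 1 → IsUnit (lkbGenMatrix n i) :=
    fun i h1 h2 => gen_isUnit n i h1 (by omega)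
  have hbraid : ∀ i, 1 ≤ i → i + 1 ≤ n - 1 →
      lkbGenMatrix n i * lkbGenMatrix n (i + 1) * lkbGenMatrix n i =
        lkbGenMatrix n (i + 1) * lkbGenMatrix n i * lkbGenMatrix n (i + 1) :=
    fun i h1 h2 => braid_rel n i h1 (by omega)
  have hcomm : ∀ i j, 1 ≤ i → 1 ≤ j → i ≤ n - 1 → j ≤ n - 1 → (i + 1 < j ∨ j + 1 < i) →
      lkbGenMatrix n i * lkbGenMatrix n j = lkbGenMatrix n j * lkbGenMatrix n i := by
    intro i j hi hj hin hjn hij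
    rcases hij with h | h
    · exact comm_rel n i j hi (by omega) (by omega)
    · exact (comm_rel n j i hj (by omega) (by omega)).symm
  refine ⟨hinv, hbraid, hcomm, ?_⟩
  let f : Fin (n - 1) → Matrix.GeneralLinearGroup (Idx n) R2 :=
    fun x => (hinv ((x : ℕ) + 1) (by omega) (by have := x.isLt; omega)).unit
  have hf : ∀ x : Fin (n - 1),
      ((f x : Matrix (Idx n) (Idx n) R2)) = lkbGenMatrix n ((x : ℕ) + 1) :=
    fun x => IsUnit.unit_spec _
  have hrels : ∀ r ∈ braidRels n, FreeGroup.lift f r = 1 := by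
    rintro r (⟨i, j, hij, rfl⟩ | ⟨i, j, hij, rfl⟩)
    · simp only [_root_.map_mul, _root_.map_inv, FreeGroup.lift_apply_of]
      rw [mul_inv_eq_one, Units.ext_iff]
      simp only [Units.val_mul, hf]
      rw [← hij]
      exact hbraid ((i : ℕ) + 1) (by omega) (by have := j.isLt; omega)
    · simp only [_root_.map_mul, _root_.map_inv, FreeGroup.lift_apply_of]
      rw [mul_inv_eq_one, Units.ext_iff]
      simp only [Units.val_mul, hf]
      exact hcomm ((i : ℕ) + 1) ((j : ℕ) + 1) (by omega) (by omega)
        (by have := i.isLt; omega) (by have := j.isLt; omega) (Or.inl (by omega))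
  refine ⟨PresentedGroup.toGroup hrels, ?_⟩
  intro i h1 h2
  rw [braidGen, dif_pos (show i - 1 < n - 1 by omega), PresentedGroup.toGroup.of]
  rw [hf]
  simp only [Fin.val_mk]
  rw [show i - 1 + 1 = i by omega]
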